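/- Greedy is 1/2-competitive for online submodular order welfare maximization with configurations: if at each arrival t Greedy selects a configuration maximizing the total marginal value Σ_i f_i(e | ALG(t)) over e ∈ N_t, then the final Greedy value Σ_i f_i(ALG) is at least half the value Σ_i f_i(OPT) of any feasible allocation OPT choosing one configuration per arrival. -/

import Mathlib

/-- `lt`-submodular order for a set function w.r.t. a strict order relation `lt`. -/
def SubmodOrderRel {α : Type*} [DecidableEq α] (lt : α → α → Prop) (f : Finset α → ℝ) : Prop :=
  ∀ A B C : Finset α, B ⊆ A →
    (∀ x ∈ A \ B, ∀ y ∈ B, lt y x) →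
    (∀ c ∈ C, ∀ x ∈ A, lt x c) →
    f (C ∪ A) - f A ≤ f (C ∪ B) - f B

/-- Greedy is 1/2-competitive for online submodular order welfare
maximization with configurations. Arrivals are `t : Fin n`, configurations `e : α`
with `τ e` the arrival of configuration `e` and `N t` the configurations of arrival `t`;
each `f i` is nonnegative monotone with `f i ∅ = 0`, modular within each `N t`, and every
arrival-consistent total order is a submodular order for `f i`. Greedy picks
`ALG t ∈ N t` maximizing total marginal value; then
`Σ_i f_i(ALG) ≥ (1/2)·Σ_i f_i(OPT)` for any allocation `o` with one configuration
per arrival. -/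
theorem stmt_8 {α : Type*} [Fintype α] [DecidableEq α] {ι : Type*} [Fintype ι]
    (n : ℕ) (τ : α → Fin n)
    (N : Fin n → Finset α) (hN : ∀ t, N t = Finset.univ.filter (fun e => τ e = t))
    (f : ι → Finset α → ℝ)
    (hnonneg : ∀ i S, 0 ≤ f i S)
    (hzero : ∀ i, f i ∅ = 0)
    (hmono : ∀ i, ∀ S₁ S₂ : Finset α, S₁ ⊆ S₂ → f i S₁ ≤ f i S₂)
    (hso : ∀ lt : α → α → Prop, IsStrictTotalOrder α lt →
      (∀ x y, τ x < τ y → lt x y) → ∀ i, SubmodOrderRel lt (f i))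
    (hmod : ∀ i t, ∀ S : Finset α, Disjoint S (N t) →
      f i (N t ∪ S) = f i S + ∑ e ∈ N t, (f i (insert e S) - f i S))
    (ALG : Fin n → α) (hALGmem : ∀ t, ALG t ∈ N t)
    (hgreedy : ∀ t, ∀ e ∈ N t,
      ∑ i, (f i (insert e ((Finset.univ.filter (fun s => s < t)).image ALG)) -
            f i ((Finset.univ.filter (fun s => s < t)).image ALG)) ≤
      ∑ i, (f i (insert (ALG t) ((Finset.univ.filter (fun s => s < t)).image ALG)) -
            f i ((Finset.univ.filter (fun s => s < t)).image ALG)))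
    (o : Fin n → α) (ho : ∀ t, o t ∈ N t) :
    ∑ i, f i (Finset.univ.image ALG) ≥ (1 / 2) * ∑ i, f i (Finset.univ.image o) := by
  classical
  -- an arrival-consistent strict total order
  set M : ℕ := Fintype.card α + 1 with hMdef
  set idx : α → ℕ := fun e => ((Fintype.equivFin α) e : ℕ) with hidxdef
  set h : α → ℕ := fun e => (τ e : ℕ) * M + idx e with hhdef
  have hidxlt : ∀ e, idx e < M := fun e =>
    lt_of_lt_of_le ((Fintype.equivFin α e).isLt) (Nat.le_succ _)
  have hM0 : 0 < M := Nat.succ_pos _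
  have hdiv : ∀ e, h e / M = (τ e : ℕ) := by
    intro e
    show ((τ e : ℕ) * M + idx e) / M = (τ e : ℕ)
    rw [mul_comm, Nat.mul_add_div hM0, Nat.div_eq_of_lt (hidxlt e), add_zero]
  have hmod' : ∀ e, h e % M = idx e := by
    intro e
    show ((τ e : ℕ) * M + idx e) % M = idx e
    rw [mul_comm, Nat.mul_add_mod, Nat.mod_eq_of_lt (hidxlt e)]
  have hinj : Function.Injective h := by
    intro x y hxy
    have hτ : (τ x : ℕ) = (τ y : ℕ) := by rw [← hdiv x, ← hdiv y, hxy]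
    have hidxeq : idx x = idx y := by rw [← hmod' x, ← hmod' y, hxy]
    have : (Fintype.equivFin α) x = (Fintype.equivFin α) y := by
      apply Fin.ext; exact hidxeq
    exact (Fintype.equivFin α).injective this
  set lt : α → α → Prop := fun x y => h x < h y with hltdef
  have harr : ∀ x y, τ x < τ y → lt x y := by
    intro x y hxy
    have h1 : (τ x : ℕ) < (τ y : ℕ) := hxy
    show h x < h y
    calc h x = (τ x : ℕ) * M + idx x := rfl
      _ < (τ x : ℕ) * M + M := by exact Nat.add_lt_add_left (hidxlt x) _
      _ = ((τ x : ℕ) + 1) * M := by ring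
      _ ≤ (τ y : ℕ) * M := Nat.mul_le_mul_right M h1
      _ ≤ (τ y : ℕ) * M + idx y := Nat.le_add_right _ _
      _ = h y := rfl
  have hsto : IsStrictTotalOrder α lt :=
    { irrefl := fun a => lt_irrefl (h a)
      trans := fun a b c hab hbc => Nat.lt_trans hab hbc
      trichotomous := fun a b => by
        rcases Nat.lt_trichotomy (h a) (h b) with h1 | h1 | h1
        · exact fun hab _ => absurd h1 hab
        · exact fun _ _ => hinj h1
        · exact fun _ hba => absurd h1 hba }
  have hsub : ∀ i, SubmodOrderRel lt (f i) := hso lt hsto harr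
  -- arrivals of greedy / opt configurations
  have hτALG : ∀ t, τ (ALG t) = t := by
    intro t
    have := hALGmem t
    rw [hN t] at this
    exact (Finset.mem_filter.mp this).2
  have hτo : ∀ t, τ (o t) = t := by
    intro t
    have := ho t
    rw [hN t] at this
    exact (Finset.mem_filter.mp this).2
  -- prefix sets of greedy, suffix sets of opt
  set Aset : ℕ → Finset α :=
    fun k => (Finset.univ.filter (fun s : Fin n => (s : ℕ) < k)).image ALG with hAdef
  set Oset : ℕ → Finset α :=
    fun k => (Finset.univ.filter (fun s : Fin n => k ≤ (s : ℕ))).image o with hOdef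
  have hA0 : Aset 0 = ∅ := by
    simp [hAdef]
  have hOn : Oset n = ∅ := by
    simp only [hOdef]
    rw [Finset.filter_false_of_mem, Finset.image_empty]
    intro s _
    exact Nat.not_le.mpr s.isLt
  have hAn : Aset n = Finset.univ.image ALG := by
    simp only [hAdef]
    congr 1
    rw [Finset.filter_true_of_mem]
    intro s _
    exact s.isLt
  have hO0 : Oset 0 = Finset.univ.image o := by
    simp only [hOdef]
    congr 1
    rw [Finset.filter_true_of_mem]
    intro s _
    exact Nat.zero_le _
  have hmemA : ∀ k e, e ∈ Aset k → (τ e : ℕ) < k := by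
    intro k e he
    simp only [hAdef, Finset.mem_image, Finset.mem_filter] at he
    obtain ⟨s, ⟨_, hs⟩, rfl⟩ := he
    rwa [hτALG]
  have hmemO : ∀ k e, e ∈ Oset k → k ≤ (τ e : ℕ) := by
    intro k e he
    simp only [hOdef, Finset.mem_image, Finset.mem_filter] at he
    obtain ⟨s, ⟨_, hs⟩, rfl⟩ := he
    rwa [hτo]
  have hzeroSum : ∑ i, f i (∅ : Finset α) = 0 :=
    Finset.sum_eq_zero fun i _ => hzero i
  -- main downward induction
  have key : ∀ j k, k + j = n →
      (∑ i, f i (Aset k ∪ Oset k)) + ∑ i, f i (Aset k) ≤ 2 * ∑ i, f i (Aset n) := by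
    intro j
    induction j with
    | zero =>
      intro k hk
      obtain rfl : k = n := by omega
      rw [hOn, Finset.union_empty]
      linarith
    | succ j ih =>
      intro k hk
      have hkn : k < n := by omega
      set t : Fin n := ⟨k, hkn⟩ with htdef
      have htval : (t : ℕ) = k := rfl
      -- set identities
      have hAsucc : Aset (k + 1) = insert (ALG t) (Aset k) := by
        simp only [hAdef]
        rw [← Finset.image_insert]
        congr 1
        ext s
        simp only [Finset.mem_insert, Finset.mem_filter, Finset.mem_univ, true_and,
          Fin.ext_iff, htval]
        omega
      have hOk : Oset k = insert (o t) (Oset (k + 1)) := by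
        simp only [hOdef]
        rw [← Finset.image_insert]
        congr 1
        ext s
        simp only [Finset.mem_insert, Finset.mem_filter, Finset.mem_univ, true_and,
          Fin.ext_iff, htval]
        omega
      -- submodular order application, per agent i
      have hsubapp : ∀ i : ι,
          f i (Aset k ∪ Oset k) - f i (insert (o t) (Aset k)) ≤
          f i (Oset (k + 1) ∪ Aset k) - f i (Aset k) := by
        intro i
        have happ := hsub i (insert (o t) (Aset k)) (Aset k) (Oset (k + 1))
          (Finset.subset_insert _ _)
          (by
            intro x hx y hy
            rw [Finset.mem_sdiff, Finset.mem_insert] at hx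
            obtain ⟨hx1 | hx1, hx2⟩ := hx
            · subst hx1
              apply harr
              have h1 := hmemA k y hy
              have h2 : (τ (o t) : ℕ) = k := by rw [hτo t]
              exact Fin.lt_def.mpr (by omega)
            · exact absurd hx1 hx2)
          (by
            intro c hc x hx
            have h1 := hmemO (k + 1) c hc
            rw [Finset.mem_insert] at hx
            apply harr
            apply Fin.lt_def.mpr
            rcases hx with rfl | hx
            · have h2 : (τ (o t) : ℕ) = k := by rw [hτo t]
              omega
            · have h2 := hmemA k x hx
              omega)
        have hCA : Oset (k + 1) ∪ insert (o t) (Aset k) = Aset k ∪ Oset k := by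
          rw [hOk]
          ext x
          simp only [Finset.mem_union, Finset.mem_insert]
          tauto
        rw [hCA] at happ
        exact happ
      -- greedy step
      have hALG_eq : ((Finset.univ.filter (fun s => s < t)).image ALG) = Aset k := by
        ext x
        simp only [hAdef, Finset.mem_image, Finset.mem_filter, Finset.mem_univ, true_and,
          Fin.lt_def, htval]
      have hg := hgreedy t (o t) (ho t)
      rw [hALG_eq] at hg
      -- monotonicity step
      have hmonoU : ∀ i : ι, f i (Oset (k + 1) ∪ Aset k) ≤
          f i (Aset (k + 1) ∪ Oset (k + 1)) := by
        intro i
        apply hmono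
        rw [hAsucc]
        intro x hx
        rw [Finset.mem_union] at hx ⊢
        rw [Finset.mem_insert]
        tauto
      have ihh := ih (k + 1) (by omega)
      -- combine
      have S1 : (∑ i, f i (Aset k ∪ Oset k)) - ∑ i, f i (insert (o t) (Aset k)) ≤
          (∑ i, f i (Oset (k + 1) ∪ Aset k)) - ∑ i, f i (Aset k) := by
        rw [← Finset.sum_sub_distrib, ← Finset.sum_sub_distrib]
        exact Finset.sum_le_sum fun i _ => hsubapp i
      have S2 : ∑ i, f i (Oset (k + 1) ∪ Aset k) ≤
          ∑ i, f i (Aset (k + 1) ∪ Oset (k + 1)) :=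
        Finset.sum_le_sum fun i _ => hmonoU i
      have S3 : (∑ i, f i (insert (o t) (Aset k))) - ∑ i, f i (Aset k) ≤
          (∑ i, f i (Aset (k + 1))) - ∑ i, f i (Aset k) := by
        rw [← Finset.sum_sub_distrib, ← Finset.sum_sub_distrib, hAsucc]
        exact hg
      linarith
  have hfinal := key n 0 (by omega)
  rw [hA0, Finset.empty_union, hO0, hAn, hzeroSum] at hfinal
  linarith
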